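/- ln 4 = Σ_{n=1}^{∞} (1/n) · C(2n,n) · (1/4)^n. -/

import Mathlib

open Real

noncomputable def cb (n : ℕ) : ℝ := ((2 * n).choose n : ℝ) / 4 ^ n

lemma cb_zero : cb 0 = 1 := by simp [cb]

lemma cb_one : cb 1 = 1 / 2 := by norm_num [cb]

lemma cb_succ (n : ℕ) : cb (n + 1) = cb n * ((2 * n + 1) / (2 * n + 2)) := by
  have h := Nat.succ_mul_centralBinom_succ n
  have hc : ∀ m : ℕ, Nat.centralBinom m = (2 * m).choose m := fun m => rfl
  rw [hc, hc] at h
  have h' : ((n : ℝ) + 1) * ((2 * (n + 1)).choose (n + 1) : ℝ)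
      = 2 * (2 * n + 1) * ((2 * n).choose n : ℝ) := by
    exact_mod_cast congrArg (Nat.cast : ℕ → ℝ) h
  have hn : ((n : ℝ) + 1) ≠ 0 := by positivity
  have h4 : (4 : ℝ) ^ (n + 1) ≠ 0 := by positivity
  have key : ((2 * (n + 1)).choose (n + 1) : ℝ) * (2 * n + 2)
      = ((2 * n).choose n : ℝ) * (2 * n + 1) * 4 := by nlinarith [h']
  simp only [cb]
  rw [pow_succ]
  field_simp
  nlinarith [key, pow_pos (show (0:ℝ) < 4 by norm_num) n]

lemma cb_pos (n : ℕ) : 0 < cb n := by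
  unfold cb
  have : 0 < (2 * n).choose n := Nat.choose_pos (by omega)
  positivity

lemma cb_le_one (n : ℕ) : cb n ≤ 1 := by
  induction n with
  | zero => simp [cb_zero]
  | succ k ih =>
    rw [cb_succ]
    have h1 : ((2 * k + 1 : ℝ)) / (2 * k + 2) ≤ 1 := by
      rw [div_le_one (by positivity)]; linarith
    calc cb k * ((2 * k + 1) / (2 * k + 2)) ≤ 1 * 1 :=
          mul_le_mul ih h1 (by positivity) zero_le_one
      _ = 1 := by ring

lemma cb_sq (n : ℕ) : cb n ^ 2 * (2 * n + 1) ≤ 1 := by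
  induction n with
  | zero => simp [cb_zero]
  | succ k ih =>
    rw [cb_succ]
    have hk : (0:ℝ) < 2 * k + 2 := by positivity
    have key : ((2 * k + 1 : ℝ)) * (2 * k + 3) ≤ (2 * k + 2) ^ 2 := by nlinarith
    have h2 : (cb k * ((2 * k + 1) / (2 * k + 2))) ^ 2 * (2 * (k + 1) + 1)
        = cb k ^ 2 * (2 * k + 1) * ((2 * k + 1) * (2 * k + 3) / (2 * k + 2) ^ 2) := by
      field_simp; ring
    push_cast
    rw [h2]
    have h3 : ((2 * k + 1 : ℝ)) * (2 * k + 3) / (2 * k + 2) ^ 2 ≤ 1 := by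
      rw [div_le_one (by positivity)]; exact key
    calc cb k ^ 2 * (2 * k + 1) * ((2 * k + 1) * (2 * k + 3) / (2 * k + 2) ^ 2)
        ≤ 1 * 1 := mul_le_mul ih h3 (by positivity) zero_le_one
      _ = 1 := by ring

lemma cb_le_inv_sqrt (n : ℕ) : cb n ≤ 1 / Real.sqrt (2 * n + 1) := by
  have h1 : (0:ℝ) < 2 * n + 1 := by positivity
  rw [le_div_iff₀ (Real.sqrt_pos.2 h1)]
  have e : cb n * Real.sqrt (2 * n + 1) = Real.sqrt (cb n ^ 2 * (2 * n + 1)) := by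
    rw [Real.sqrt_mul (sq_nonneg _), Real.sqrt_sq (cb_pos n).le]
  rw [e]
  calc Real.sqrt (cb n ^ 2 * (2 * n + 1)) ≤ Real.sqrt 1 := Real.sqrt_le_sqrt (cb_sq n)
    _ = 1 := Real.sqrt_one

lemma summable_c : Summable (fun n : ℕ => cb (n + 1) / (n + 1)) := by
  have hs : Summable (fun n : ℕ => 1 / ((n:ℝ) + 1) ^ ((3:ℝ)/2)) := by
    have h0 : Summable (fun n : ℕ => 1 / ((n:ℝ)) ^ ((3:ℝ)/2)) :=
      Real.summable_one_div_nat_rpow.2 (by norm_num)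
    have hs := (summable_nat_add_iff (f := fun n : ℕ => 1 / ((n:ℝ)) ^ ((3:ℝ)/2)) 1).2 h0
    refine hs.congr fun n => ?_
    push_cast
    rfl
  refine hs.of_nonneg_of_le (fun n => by have := (cb_pos (n+1)).le; positivity) (fun n => ?_)
  have hn1 : (0:ℝ) < (n:ℝ) + 1 := by positivity
  have hrw : ((n:ℝ) + 1) ^ ((3:ℝ)/2) = ((n:ℝ) + 1) * Real.sqrt ((n:ℝ) + 1) := by
    rw [show ((3:ℝ)/2) = 1 + 1/2 by norm_num, Real.rpow_add hn1, Real.rpow_one,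
      Real.sqrt_eq_rpow]
  rw [hrw]
  have h1 : cb (n + 1) ≤ 1 / Real.sqrt ((n:ℝ) + 1) := by
    refine (cb_le_inv_sqrt (n + 1)).trans ?_
    apply one_div_le_one_div_of_le (Real.sqrt_pos.2 hn1)
    exact Real.sqrt_le_sqrt (by push_cast; linarith)
  have h3 : (0:ℝ) < Real.sqrt ((n:ℝ) + 1) := Real.sqrt_pos.2 hn1
  calc cb (n + 1) / ((n:ℝ) + 1) ≤ (1 / Real.sqrt ((n:ℝ) + 1)) / ((n:ℝ) + 1) := by
        apply div_le_div_of_nonneg_right h1 hn1.le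
    _ = 1 / (((n:ℝ) + 1) * Real.sqrt ((n:ℝ) + 1)) := by field_simp

open Set

lemma summable_aux {x : ℝ} (hx : |x| < 1) (b : ℕ → ℝ) (hb0 : ∀ n, 0 ≤ b n)
    (hb : ∀ n, b n ≤ 1) : Summable (fun n => b n * x ^ n) := by
  refine Summable.of_norm_bounded (summable_geometric_of_lt_one (abs_nonneg x) hx) fun n => ?_
  rw [norm_mul, norm_pow, Real.norm_eq_abs, Real.norm_eq_abs, abs_of_nonneg (hb0 n)]
  exact mul_le_of_le_one_left (by positivity) (hb n)

lemma summable_S {x : ℝ} (hx : |x| < 1) : Summable (fun n => cb n * x ^ n) :=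
  summable_aux hx _ (fun n => (cb_pos n).le) cb_le_one

lemma summable_V {x : ℝ} (hx : |x| < 1) : Summable (fun n => cb (n + 1) * x ^ n) :=
  summable_aux hx _ (fun n => (cb_pos _).le) (fun n => cb_le_one _)

lemma summable_D {x : ℝ} (hx : |x| < 1) :
    Summable (fun n : ℕ => cb n * (n * x ^ (n - 1))) := by
  rw [← summable_nat_add_iff 1]
  have h1 : Summable (fun n : ℕ => ((n:ℝ) + 1) * |x| ^ n) := by
    have ha : Summable (fun n : ℕ => (n:ℝ) * |x| ^ n) :=
      (hasSum_coe_mul_geometric_of_norm_lt_one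
        (by rwa [Real.norm_eq_abs, abs_abs])).summable
    have hb : Summable (fun n : ℕ => |x| ^ n) :=
      summable_geometric_of_norm_lt_one (by rwa [Real.norm_eq_abs, abs_abs])
    exact (ha.add hb).congr fun n => by ring
  refine h1.of_norm_bounded fun n => ?_
  have : ((n:ℝ) + 1) * |x| ^ n = |((n:ℝ) + 1) * x ^ n| := by
    rw [abs_mul, abs_pow, abs_of_nonneg (by positivity : (0:ℝ) ≤ (n:ℝ) + 1)]
  rw [Real.norm_eq_abs]
  calc |cb (n + 1) * (↑(n + 1) * x ^ (n + 1 - 1))|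
      = cb (n + 1) * (((n:ℝ) + 1) * |x| ^ n) := by
        rw [abs_mul, abs_of_nonneg (cb_pos _).le]
        congr 1
        rw [abs_mul, abs_pow, Nat.abs_cast, Nat.add_sub_cancel]
        push_cast
        ring
    _ ≤ 1 * (((n:ℝ) + 1) * |x| ^ n) := by
        apply mul_le_mul_of_nonneg_right (cb_le_one _) (by positivity)
    _ = ((n:ℝ) + 1) * |x| ^ n := one_mul _

lemma summable_T {x : ℝ} (hx : |x| < 1) :
    Summable (fun n : ℕ => cb (n + 1) * x ^ (n + 1) / (n + 1)) := by
  refine Summable.of_norm_bounded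
    (summable_geometric_of_lt_one (abs_nonneg x) hx) fun n => ?_
  rw [Real.norm_eq_abs, abs_div, abs_mul, abs_pow,
    abs_of_nonneg (cb_pos _).le, abs_of_nonneg (by positivity : (0:ℝ) ≤ (n:ℝ)+1)]
  calc cb (n+1) * |x| ^ (n+1) / ((n:ℝ)+1)
      ≤ 1 * |x| ^ (n+1) / 1 := by
        apply div_le_div₀ (by positivity)
          (mul_le_mul_of_nonneg_right (cb_le_one _) (by positivity))
          one_pos (by norm_num)
    _ = |x| * |x| ^ n := by rw [pow_succ]; ring
    _ ≤ 1 * |x| ^ n := mul_le_mul_of_nonneg_right hx.le (by positivity)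
    _ = |x| ^ n := one_mul _

noncomputable def Sf (x : ℝ) : ℝ := ∑' n, cb n * x ^ n
noncomputable def Vf (x : ℝ) : ℝ := ∑' n, cb (n + 1) * x ^ n
noncomputable def Df (x : ℝ) : ℝ := ∑' n : ℕ, cb n * (n * x ^ (n - 1))
noncomputable def Tf (x : ℝ) : ℝ := ∑' n : ℕ, cb (n + 1) * x ^ (n + 1) / (n + 1)

lemma hasDerivAt_Sf {x : ℝ} (hx : |x| < 1) : HasDerivAt Sf (Df x) x := by
  set r : ℝ := (1 + |x|) / 2 with hr
  have hr0 : 0 < r := by positivity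
  have hxr : |x| < r := by rw [hr]; linarith
  have hr1 : r < 1 := by rw [hr]; linarith
  have hu : Summable (fun n : ℕ => (n:ℝ) * r ^ (n - 1)) := by
    rw [← summable_nat_add_iff 1]
    have ha : Summable (fun n : ℕ => (n:ℝ) * r ^ n) :=
      (hasSum_coe_mul_geometric_of_norm_lt_one
        (by rwa [Real.norm_eq_abs, abs_of_nonneg hr0.le])).summable
    have hb : Summable (fun n : ℕ => r ^ n) :=
      summable_geometric_of_norm_lt_one (by rwa [Real.norm_eq_abs, abs_of_nonneg hr0.le])
    refine ((ha.add hb).congr fun n => ?_)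
    rw [Nat.add_sub_cancel]
    push_cast
    ring
  have key : HasDerivAt (fun z => ∑' n, cb n * z ^ n)
      (∑' n : ℕ, cb n * ((n:ℝ) * x ^ (n - 1))) x := by
    refine hasDerivAt_tsum_of_isPreconnected
      (g := fun (n : ℕ) (y : ℝ) => cb n * y ^ n)
      (g' := fun (n : ℕ) (y : ℝ) => cb n * ((n:ℝ) * y ^ (n - 1)))
      hu (isOpen_Ioo (a := -r) (b := r))
      (convex_Ioo _ _).isPreconnected (fun n y _ => ?_) (fun n y hy => ?_)
      (by constructor <;> linarith : (0:ℝ) ∈ Ioo (-r) r)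
      ?_ (by constructor <;> [linarith [neg_abs_le x]; linarith [le_abs_self x]] :
        x ∈ Ioo (-r) r)
    · exact (hasDerivAt_pow n y).const_mul (cb n)
    · have hyr : |y| ≤ r := by
        rw [abs_le]; exact ⟨hy.1.le, hy.2.le⟩
      rw [Real.norm_eq_abs, abs_mul, abs_of_nonneg (cb_pos _).le, abs_mul, abs_pow]
      calc cb n * (|(n:ℝ)| * |y| ^ (n-1))
          ≤ 1 * (|(n:ℝ)| * r ^ (n-1)) := by
            apply mul_le_mul (cb_le_one n) _ (by positivity) zero_le_one
            exact mul_le_mul_of_nonneg_left (pow_le_pow_left₀ (abs_nonneg y) hyr _) (abs_nonneg _)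
        _ = (n:ℝ) * r ^ (n-1) := by rw [one_mul, abs_of_nonneg (Nat.cast_nonneg n)]
    · exact (summable_S (x := 0) (by norm_num)).congr fun n => rfl
  exact key

lemma hasDerivAt_Tf {x : ℝ} (hx : |x| < 1) : HasDerivAt Tf (Vf x) x := by
  set r : ℝ := (1 + |x|) / 2 with hr
  have hr0 : 0 < r := by positivity
  have hxr : |x| < r := by rw [hr]; linarith
  have hr1 : r < 1 := by rw [hr]; linarith
  have hu : Summable (fun n : ℕ => r ^ n) :=
    summable_geometric_of_norm_lt_one (by rwa [Real.norm_eq_abs, abs_of_nonneg hr0.le])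
  have key : HasDerivAt (fun z => ∑' n : ℕ, cb (n + 1) * z ^ (n + 1) / (n + 1))
      (∑' n : ℕ, cb (n + 1) * x ^ n) x := by
    refine hasDerivAt_tsum_of_isPreconnected
      (g := fun (n : ℕ) (y : ℝ) => cb (n + 1) * y ^ (n + 1) / (n + 1))
      (g' := fun (n : ℕ) (y : ℝ) => cb (n + 1) * y ^ n)
      hu (isOpen_Ioo (a := -r) (b := r))
      (convex_Ioo _ _).isPreconnected (fun n y _ => ?_) (fun n y hy => ?_)
      (by constructor <;> linarith : (0:ℝ) ∈ Ioo (-r) r)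
      ?_ (by constructor <;> [linarith [neg_abs_le x]; linarith [le_abs_self x]] :
        x ∈ Ioo (-r) r)
    · have h := ((hasDerivAt_pow (n+1) y).const_mul (cb (n+1))).div_const ((n:ℝ)+1)
      refine h.congr_deriv ?_
      have hne : ((n:ℝ) + 1) ≠ 0 := by positivity
      rw [Nat.add_sub_cancel]
      push_cast
      field_simp
    · have hyr : |y| ≤ r := by rw [abs_le]; exact ⟨hy.1.le, hy.2.le⟩
      rw [Real.norm_eq_abs, abs_mul, abs_of_nonneg (cb_pos _).le, abs_pow]
      calc cb (n+1) * |y| ^ n ≤ 1 * r ^ n := by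
            apply mul_le_mul (cb_le_one _) (pow_le_pow_left₀ (abs_nonneg y) hyr _)
              (by positivity) zero_le_one
        _ = r ^ n := one_mul _
    · exact (summable_T (x := 0) (by norm_num)).congr fun n => rfl
  exact key

lemma Sf_zero : Sf 0 = 1 := by
  unfold Sf
  rw [tsum_eq_single 0 (fun n hn => by simp [zero_pow hn])]
  simp [cb_zero]

lemma ode {x : ℝ} (hx : |x| < 1) : Df x = x * Df x + Sf x / 2 := by
  have hD : HasSum (fun n : ℕ => cb n * (n * x ^ (n - 1))) (Df x) := (summable_D hx).hasSum
  have hS : HasSum (fun n : ℕ => cb n * x ^ n) (Sf x) := (summable_S hx).hasSum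
  -- shifted version of hD
  have hD1 : HasSum (fun n : ℕ => cb (n + 1) * ((n + 1 : ℝ) * x ^ n)) (Df x) := by
    have h := (hasSum_nat_add_iff' (f := fun n : ℕ => cb n * (n * x ^ (n - 1))) 1).2 hD
    simp only [Finset.range_one, Finset.sum_singleton, Nat.cast_zero, zero_mul, mul_zero,
      sub_zero] at h
    refine h.congr_fun fun n => ?_
    rw [Nat.add_sub_cancel]
    push_cast
    ring
  -- rewrite coefficients via cb_succ
  have hD2 : HasSum (fun n : ℕ => (n : ℝ) * (cb n * x ^ n) + (1/2) * (cb n * x ^ n)) (Df x) := by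
    refine hD1.congr_fun fun n => ?_
    rw [cb_succ]
    have h2 : ((2:ℝ) * n + 2) ≠ 0 := by positivity
    field_simp
  -- the other decomposition
  have hxD : HasSum (fun n : ℕ => (n : ℝ) * (cb n * x ^ n)) (x * Df x) := by
    have h := hD.mul_left x
    refine h.congr_fun fun n => ?_
    cases n with
    | zero => simp
    | succ k =>
      rw [Nat.add_sub_cancel]
      push_cast
      rw [pow_succ]
      ring
  have hcomb : HasSum (fun n : ℕ => (n : ℝ) * (cb n * x ^ n) + (1/2) * (cb n * x ^ n))
      (x * Df x + Sf x / 2) := by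
    have := hxD.add (hS.mul_left (1/2))
    convert this using 2
    ring
  exact hD2.unique hcomb

lemma hasDerivAt_E {y : ℝ} (hy : |y| < 1) :
    HasDerivAt (fun z => Real.sqrt (1 - z) * Sf z) 0 y := by
  have h1y : (0:ℝ) < 1 - y := by
    have := abs_lt.1 hy
    linarith [this.2]
  have hs : HasDerivAt (fun z : ℝ => Real.sqrt (1 - z)) (-(1 / (2 * Real.sqrt (1 - y)))) y := by
    have h1 : HasDerivAt (fun z : ℝ => 1 - z) (-1) y := by
      simpa using (hasDerivAt_id y).const_sub 1
    have h2 := (Real.hasDerivAt_sqrt h1y.ne').comp y h1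
    refine h2.congr_deriv ?_
    ring
  have hmul := hs.mul (hasDerivAt_Sf hy)
  refine hmul.congr_deriv ?_
  have hsy : (0:ℝ) < Real.sqrt (1 - y) := Real.sqrt_pos.2 h1y
  have hde : (1 - y) * Df y = Sf y / 2 := by
    have := ode hy
    nlinarith [this]
  have h2 : Real.sqrt (1 - y) * Df y = Sf y / (2 * Real.sqrt (1 - y)) := by
    rw [eq_div_iff (by positivity)]
    calc Real.sqrt (1-y) * Df y * (2 * Real.sqrt (1-y))
        = 2 * ((Real.sqrt (1-y) * Real.sqrt (1-y)) * Df y) := by ring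
      _ = 2 * ((1-y) * Df y) := by rw [Real.mul_self_sqrt h1y.le]
      _ = Sf y := by rw [hde]; ring
  rw [h2]
  ring

lemma Sf_eq {x : ℝ} (h0 : 0 ≤ x) (h1 : x < 1) : Real.sqrt (1 - x) * Sf x = 1 := by
  have habs : ∀ y ∈ Icc (0:ℝ) x, |y| < 1 := fun y hy => by
    rw [abs_lt]; constructor <;> [linarith [hy.1]; linarith [hy.2]]
  have hconst := constant_of_has_deriv_right_zero
    (f := fun z => Real.sqrt (1 - z) * Sf z) (a := 0) (b := x)
    (fun y hy => (hasDerivAt_E (habs y hy)).continuousAt.continuousWithinAt)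
    (fun y hy => ((hasDerivAt_E (habs y (mem_Icc.2 ⟨hy.1, hy.2.le⟩))).hasDerivWithinAt))
  have := hconst x (mem_Icc.2 ⟨h0, le_refl x⟩)
  simpa [Sf_zero] using this

lemma Sf_val {x : ℝ} (h0 : 0 ≤ x) (h1 : x < 1) : Sf x = 1 / Real.sqrt (1 - x) := by
  have h1x : (0:ℝ) < 1 - x := by linarith
  have hs : (0:ℝ) < Real.sqrt (1 - x) := Real.sqrt_pos.2 h1x
  field_simp
  linarith [Sf_eq h0 h1]

lemma Vf_zero : Vf 0 = 1 / 2 := by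
  unfold Vf
  rw [tsum_eq_single 0 (fun n hn => by simp [zero_pow hn])]
  simp [cb_one]

lemma shift {x : ℝ} (hx : |x| < 1) : x * Vf x = Sf x - 1 := by
  have hV : HasSum (fun n : ℕ => cb (n + 1) * x ^ n) (Vf x) := (summable_V hx).hasSum
  have hS : HasSum (fun n : ℕ => cb n * x ^ n) (Sf x) := (summable_S hx).hasSum
  have h1 : HasSum (fun n : ℕ => cb (n + 1) * x ^ (n + 1)) (x * Vf x) := by
    refine (hV.mul_left x).congr_fun fun n => ?_
    rw [pow_succ]
    ring
  have h2 : HasSum (fun n : ℕ => cb (n + 1) * x ^ (n + 1)) (Sf x - 1) := by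
    have h := (hasSum_nat_add_iff' (f := fun n : ℕ => cb n * x ^ n) 1).2 hS
    simpa [cb_zero] using h
  exact h1.unique h2

lemma Vf_val {x : ℝ} (h0 : 0 ≤ x) (h1 : x < 1) :
    Vf x = 1 / (Real.sqrt (1 - x) * (1 + Real.sqrt (1 - x))) := by
  have h1x : (0:ℝ) < 1 - x := by linarith
  have hs : (0:ℝ) < Real.sqrt (1 - x) := Real.sqrt_pos.2 h1x
  rcases eq_or_lt_of_le h0 with h | hpos
  · rw [← h]
    norm_num [Vf_zero]
  · have hx : |x| < 1 := abs_lt.2 ⟨by linarith, h1⟩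
    have key := shift hx
    rw [Sf_val h0 h1] at key
    have hss : Real.sqrt (1 - x) * Real.sqrt (1 - x) = 1 - x := Real.mul_self_sqrt h1x.le
    rw [eq_div_iff (by positivity)]
    have hxne : x ≠ 0 := hpos.ne'
    field_simp at key ⊢
    nlinarith [key, hss]

lemma Tf_zero : Tf 0 = 0 := by
  unfold Tf
  have : (fun n : ℕ => cb (n + 1) * (0:ℝ) ^ (n + 1) / (n + 1)) = fun _ => 0 := by
    funext n
    simp
  rw [this, tsum_zero]

noncomputable def hfun (y : ℝ) : ℝ := -2 * Real.log ((1 + Real.sqrt (1 - y)) / 2)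

lemma hasDerivAt_hfun {y : ℝ} (hy : |y| < 1) :
    HasDerivAt hfun (1 / (Real.sqrt (1 - y) * (1 + Real.sqrt (1 - y)))) y := by
  have h1y : (0:ℝ) < 1 - y := by have := abs_lt.1 hy; linarith [this.2]
  have hsy : (0:ℝ) < Real.sqrt (1 - y) := Real.sqrt_pos.2 h1y
  have hs : HasDerivAt (fun z : ℝ => Real.sqrt (1 - z)) (-(1 / (2 * Real.sqrt (1 - y)))) y := by
    have hlin : HasDerivAt (fun z : ℝ => 1 - z) (-1) y := by
      simpa using (hasDerivAt_id y).const_sub 1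
    have h2 := (Real.hasDerivAt_sqrt h1y.ne').comp y hlin
    refine h2.congr_deriv ?_
    ring
  have hg : HasDerivAt (fun z : ℝ => (1 + Real.sqrt (1 - z)) / 2)
      ((-(1 / (2 * Real.sqrt (1 - y)))) / 2) y := (hs.const_add 1).div_const 2
  have hgy : ((1 + Real.sqrt (1 - y)) / 2) ≠ 0 := by positivity
  have hlog := (hg.log hgy).const_mul (-2)
  refine hlog.congr_deriv ?_
  field_simp

lemma Tf_val {x : ℝ} (h0 : 0 ≤ x) (h1 : x < 1) : Tf x = hfun x := by
  have habs : ∀ y ∈ Icc (0:ℝ) x, |y| < 1 := fun y hy => by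
    rw [abs_lt]; constructor <;> [linarith [hy.1]; linarith [hy.2]]
  have hder : ∀ y ∈ Icc (0:ℝ) x, HasDerivAt (fun z => Tf z - hfun z) 0 y := by
    intro y hy
    have h := (hasDerivAt_Tf (habs y hy)).sub (hasDerivAt_hfun (habs y hy))
    have hv := Vf_val hy.1 (lt_of_le_of_lt hy.2 h1)
    rw [hv] at h
    exact h.congr_deriv (sub_self _)
  have hconst := constant_of_has_deriv_right_zero
    (f := fun z => Tf z - hfun z) (a := 0) (b := x)
    (fun y hy => (hder y hy).continuousAt.continuousWithinAt)
    (fun y hy => (hder y (mem_Icc.2 ⟨hy.1, hy.2.le⟩)).hasDerivWithinAt)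
  have := hconst x (mem_Icc.2 ⟨h0, le_refl x⟩)
  have hzero : Tf 0 - hfun 0 = 0 := by
    rw [Tf_zero]
    unfold hfun
    norm_num
  rw [hzero] at this
  linarith [this]

lemma hfun_tendsto : Filter.Tendsto hfun (nhdsWithin (1:ℝ) (Iio 1)) (nhds (Real.log 4)) := by
  have hc1 : ContinuousAt (fun y : ℝ => (1 + Real.sqrt (1 - y)) / 2) 1 := by
    apply ContinuousAt.div_const
    apply ContinuousAt.add continuousAt_const
    exact (Real.continuous_sqrt.comp (continuous_const.sub continuous_id)).continuousAt
  have hne : ((1 + Real.sqrt (1 - (1:ℝ))) / 2) ≠ 0 := by norm_num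
  have hlog : ContinuousAt hfun 1 := by
    unfold hfun
    exact continuousAt_const.mul (hc1.log hne)
  have hval : hfun 1 = Real.log 4 := by
    unfold hfun
    rw [show (1:ℝ) - 1 = 0 by ring, Real.sqrt_zero]
    have h12 : ((1:ℝ) + 0) / 2 = 2⁻¹ := by norm_num
    rw [h12, Real.log_inv, show (4:ℝ) = 2 ^ 2 by norm_num, Real.log_pow]
    push_cast
    ring
  rw [← hval]
  exact hlog.tendsto.mono_left nhdsWithin_le_nhds

lemma L_eq : ∑' n : ℕ, cb (n + 1) / (n + 1) = Real.log 4 := by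
  set L : ℝ := ∑' n : ℕ, cb (n + 1) / (n + 1) with hLdef
  have hmem : Ioo (0:ℝ) 1 ∈ nhdsWithin (1:ℝ) (Iio 1) :=
    Ioo_mem_nhdsLT_of_mem (by constructor <;> norm_num)
  have hub : L ≤ Real.log 4 := by
    apply tsum_le_of_sum_range_le (fun n => by have := (cb_pos (n+1)).le; positivity)
    intro N
    have ev : ∀ᶠ x in nhdsWithin (1:ℝ) (Iio 1),
        ∑ n ∈ Finset.range N, cb (n + 1) * x ^ (n + 1) / (n + 1) ≤ hfun x := by
      filter_upwards [hmem] with x hx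
      have hx1 : |x| < 1 := abs_lt.2 ⟨by linarith [hx.1], hx.2⟩
      rw [← Tf_val hx.1.le hx.2]
      exact Summable.sum_le_tsum (Finset.range N)
        (fun n _ => by have := (cb_pos (n+1)).le; have := hx.1.le; positivity)
        (summable_T hx1)
    have t1 : Filter.Tendsto (fun x : ℝ => ∑ n ∈ Finset.range N, cb (n + 1) * x ^ (n + 1) / (n + 1))
        (nhdsWithin (1:ℝ) (Iio 1)) (nhds (∑ n ∈ Finset.range N, cb (n + 1) / (n + 1))) := by
      have hcont : Continuous (fun x : ℝ => ∑ n ∈ Finset.range N, cb (n + 1) * x ^ (n + 1) / (n + 1)) := by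
        apply continuous_finset_sum
        intro n _
        exact ((continuous_const.mul (continuous_pow (n+1))).div_const _)
      have := (hcont.tendsto 1).mono_left (nhdsWithin_le_nhds (s := Iio (1:ℝ)))
      simpa using this
    exact le_of_tendsto_of_tendsto t1 hfun_tendsto ev
  have hlb : Real.log 4 ≤ L := by
    apply le_of_tendsto hfun_tendsto
    filter_upwards [hmem] with x hx
    have hx1 : |x| < 1 := abs_lt.2 ⟨by linarith [hx.1], hx.2⟩
    rw [← Tf_val hx.1.le hx.2]
    apply Summable.tsum_le_tsum _ (summable_T hx1) summable_c
    intro n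
    have hcb := (cb_pos (n+1)).le
    have hn1 : (0:ℝ) < (n:ℝ) + 1 := by positivity
    apply div_le_div_of_nonneg_right _ hn1.le
    calc cb (n+1) * x ^ (n+1) ≤ cb (n+1) * 1 := by
          apply mul_le_mul_of_nonneg_left _ hcb
          exact pow_le_one₀ hx.1.le hx.2.le
      _ = cb (n+1) := mul_one _
  linarith

/-- `ln 4 = Σ_{n=1}^∞ (1/n) C(2n,n) (1/4)^n`. -/
theorem log_four_eq_series :
    HasSum (fun n : ℕ =>
      (1 / (n + 1 : ℝ)) * ((2 * (n + 1)).choose (n + 1) : ℝ) * (1 / 4 : ℝ) ^ (n + 1))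
      (Real.log 4) := by
  have hfe : (fun n : ℕ =>
      (1 / (n + 1 : ℝ)) * ((2 * (n + 1)).choose (n + 1) : ℝ) * (1 / 4 : ℝ) ^ (n + 1))
      = fun n : ℕ => cb (n + 1) / (n + 1) := by
    funext n
    unfold cb
    have h4 : ((4:ℝ)) ^ (n+1) ≠ 0 := by positivity
    have hn1 : ((n:ℝ) + 1) ≠ 0 := by positivity
    rw [div_pow, one_pow, div_div]
    rw [eq_div_iff (mul_ne_zero h4 hn1)]
    field_simp
  rw [hfe, ← L_eq]
  exact summable_c.hasSum
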